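/- Assume the direct-system setup with the interleaving hypothesis (H) and properties (S) and (K), and fix one index k for which the interleaving homomorphisms a_n : F_n → G^k_{n+1} and b_n : G^k_n → F_{n+1} exist for all n ≤ 10 (with the commutation and composition identities of (H)). Then: (a) whenever x, x' ∈ F_2 satisfy i_2(x) = i_2(x'), one has j^k_3(a_2(x)) = j^k_3(a_2(x')) in G^k_∞; and (b) the resulting maps ψ_n : F_n → G^k_∞, defined by ψ_n(ξ) = j^k_3(a_2(η)) for any η ∈ F_2 with i_2(η) = i_n(ξ), are well-defined homomorphisms and are compatible, i.e. ψ_m ∘ i_{n,m} = ψ_n for all n ≤ m. -/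
import Mathlib


/-- Claim 3.4 of the paper: under the direct-system setup with (H), (S), (K), and a
fixed index `k` whose interleaving homomorphisms `a_n, b_n` exist for all `n ≤ 10`,
(a) if `i 2 x = i 2 x'` then `j k 3 (a 2 x) = j k 3 (a 2 x')`, and (b) the maps
`ψ_n : F n →+ G^k_∞`, `ψ_n ξ = j k 3 (a 2 η)` for any `η` with `i 2 η = i n ξ`,
are well-defined homomorphisms compatible with the transition maps. -/
theorem psi_well_defined
    (F : ℕ → Type) [∀ n, AddCommGroup (F n)]
    (Finf : Type) [AddCommGroup Finf]
    (i2 : ∀ n m : ℕ, n ≤ m → (F n →+ F m))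
    (i : ∀ n, F n →+ Finf)
    (hFid : ∀ (n : ℕ) (x : F n), i2 n n le_rfl x = x)
    (hFcomp : ∀ (n m l : ℕ) (h1 : n ≤ m) (h2 : m ≤ l) (x : F n),
      i2 m l h2 (i2 n m h1 x) = i2 n l (h1.trans h2) x)
    (hicompat : ∀ (n m : ℕ) (h : n ≤ m) (x : F n), i m (i2 n m h x) = i n x)
    (hiexh : ∀ z : Finf, ∃ (n : ℕ) (x : F n), i n x = z)
    (hiker : ∀ (n : ℕ) (x : F n), i n x = 0 → ∃ (m : ℕ) (h : n ≤ m), i2 n m h x = 0)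
    (G : ℕ → ℕ → Type) [∀ k n, AddCommGroup (G k n)]
    (Ginf : ℕ → Type) [∀ k, AddCommGroup (Ginf k)]
    (j2 : ∀ (k n m : ℕ), n ≤ m → (G k n →+ G k m))
    (j : ∀ k n, G k n →+ Ginf k)
    (hGid : ∀ (k n : ℕ) (y : G k n), j2 k n n le_rfl y = y)
    (hGcomp : ∀ (k n m l : ℕ) (h1 : n ≤ m) (h2 : m ≤ l) (y : G k n),
      j2 k m l h2 (j2 k n m h1 y) = j2 k n l (h1.trans h2) y)
    (hjcompat : ∀ (k n m : ℕ) (h : n ≤ m) (y : G k n), j k m (j2 k n m h y) = j k n y)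
    (hjexh : ∀ (k : ℕ) (z : Ginf k), ∃ (n : ℕ) (y : G k n), j k n y = z)
    (hjker : ∀ (k n : ℕ) (y : G k n), j k n y = 0 → ∃ (m : ℕ) (h : n ≤ m), j2 k n m h y = 0)
    (hH : ∀ n₀ : ℕ, ∃ (k : ℕ) (a : ∀ n, F n →+ G k (n+1)) (b : ∀ n, G k n →+ F (n+1)),
      (∀ n, n + 1 ≤ n₀ → ∀ x : F n,
        a (n+1) (i2 n (n+1) (by omega) x) = j2 k (n+1) (n+2) (by omega) (a n x)) ∧
      (∀ n, n + 1 ≤ n₀ → ∀ y : G k n,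
        b (n+1) (j2 k n (n+1) (by omega) y) = i2 (n+1) (n+2) (by omega) (b n y)) ∧
      (∀ n, n + 1 ≤ n₀ → ∀ x : F n, b (n+1) (a n x) = i2 n (n+2) (by omega) x) ∧
      (∀ n, n + 1 ≤ n₀ → ∀ y : G k n, a (n+1) (b n y) = j2 k n (n+2) (by omega) y))
    (hS : ∀ k n, Function.Surjective (j k n))
    (hK : ∀ (k n : ℕ) (y : G k n), j k n y = 0 → j2 k n (n+1) (by omega) y = 0)
    (k : ℕ) (a : ∀ n, F n →+ G k (n+1)) (b : ∀ n, G k n →+ F (n+1))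
    (hacomm : ∀ n, n + 1 ≤ 10 → ∀ x : F n,
      a (n+1) (i2 n (n+1) (by omega) x) = j2 k (n+1) (n+2) (by omega) (a n x))
    (hbcomm : ∀ n, n + 1 ≤ 10 → ∀ y : G k n,
      b (n+1) (j2 k n (n+1) (by omega) y) = i2 (n+1) (n+2) (by omega) (b n y))
    (hba : ∀ n, n + 1 ≤ 10 → ∀ x : F n, b (n+1) (a n x) = i2 n (n+2) (by omega) x)
    (hab : ∀ n, n + 1 ≤ 10 → ∀ y : G k n, a (n+1) (b n y) = j2 k n (n+2) (by omega) y)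
    : (∀ x x' : F 2, i 2 x = i 2 x' → j k 3 (a 2 x) = j k 3 (a 2 x')) ∧
      ∃ ψ : ∀ n, F n →+ Ginf k,
        (∀ (n : ℕ) (ξ : F n) (η : F 2), i 2 η = i n ξ → ψ n ξ = j k 3 (a 2 η)) ∧
        (∀ (n m : ℕ) (h : n ≤ m) (ξ : F n), ψ m (i2 n m h ξ) = ψ n ξ) := by
  -- Iterated commutation for `a`-type maps
  have iterA : ∀ (k' : ℕ) (a' : ∀ n, F n →+ G k' (n+1)) (n₀ : ℕ),
      (∀ n, n + 1 ≤ n₀ → ∀ x : F n,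
        a' (n+1) (i2 n (n+1) (by omega) x) = j2 k' (n+1) (n+2) (by omega) (a' n x)) →
      ∀ (n l : ℕ) (h : n ≤ l), l ≤ n₀ → ∀ x : F n,
        a' l (i2 n l h x) = j2 k' (n+1) (l+1) (by omega) (a' n x) := by
    intro k' a' n₀ ha n l h
    induction l, h using Nat.le_induction with
    | base => intro _ x; rw [hFid, hGid]
    | succ l hnl IH =>
        intro hl x
        have e1 : i2 n (l+1) (by omega) x
            = i2 l (l+1) (by omega) (i2 n l hnl x) :=
          (hFcomp n l (l+1) hnl (by omega) x).symm
        rw [e1, ha l (by omega), IH (by omega), hGcomp]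
  -- Iterated commutation for `b`-type maps
  have iterB : ∀ (k' : ℕ) (b' : ∀ n, G k' n →+ F (n+1)) (n₀ : ℕ),
      (∀ n, n + 1 ≤ n₀ → ∀ y : G k' n,
        b' (n+1) (j2 k' n (n+1) (by omega) y) = i2 (n+1) (n+2) (by omega) (b' n y)) →
      ∀ (n l : ℕ) (h : n ≤ l), l ≤ n₀ → ∀ y : G k' n,
        b' l (j2 k' n l h y) = i2 (n+1) (l+1) (by omega) (b' n y) := by
    intro k' b' n₀ hb n l h
    induction l, h using Nat.le_induction with
    | base => intro _ y; rw [hGid, hFid]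
    | succ l hnl IH =>
        intro hl y
        have e1 : j2 k' n (l+1) (by omega) y
            = j2 k' l (l+1) (by omega) (j2 k' n l hnl y) :=
          (hGcomp k' n l (l+1) hnl (by omega) y).symm
        rw [e1, hb l (by omega), IH (by omega), hFcomp]
  -- Key vanishing lemma: part (a) in difference form
  have key : ∀ d : F 2, i 2 d = 0 → j k 3 (a 2 d) = 0 := by
    intro d hd
    obtain ⟨M, hM2, hMz⟩ := hiker 2 d hd
    obtain ⟨k', a', b', ha', hb', hb'a', _⟩ := hH (M + 5)
    have h2 : j k' 3 (a' 2 d) = 0 := by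
      rw [← hjcompat k' 3 (M+1) (by omega) (a' 2 d),
        ← iterA k' a' (M+5) ha' 2 M hM2 (by omega) d, hMz, map_zero, map_zero]
    have h3 := hK k' 3 _ h2
    have h4 : a' 3 (i2 2 3 (by omega) d) = 0 := by
      rw [ha' 2 (by omega) d]; exact h3
    have h5 : i2 2 5 (by omega) d = 0 := by
      have h6 := hb'a' 3 (by omega) (i2 2 3 (by omega) d)
      rw [h4, map_zero, hFcomp] at h6
      exact h6.symm
    rw [← hjcompat k 3 6 (by omega) (a 2 d),
      ← iterA k a 10 hacomm 2 5 (by omega) (by omega) d, h5, map_zero, map_zero]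
  have parta : ∀ x x' : F 2, i 2 x = i 2 x' → j k 3 (a 2 x) = j k 3 (a 2 x') := by
    intro x x' h
    have h0 : j k 3 (a 2 (x - x')) = 0 := key (x - x') (by rw [map_sub, h, sub_self])
    rw [map_sub, map_sub, sub_eq_zero] at h0
    exact h0
  -- Surjectivity onto the limit from level 2
  have hsurj2 : ∀ (n : ℕ) (ξ : F n), ∃ η : F 2, i 2 η = i n ξ := by
    intro n ξ
    obtain ⟨k', a', b', ha', hb', hb'a', _⟩ := hH (n + 5)
    obtain ⟨y1, hy1⟩ := hS k' 1 (j k' (n+1) (a' n ξ))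
    refine ⟨b' 1 y1, ?_⟩
    have h0 : j k' (n+1) (j2 k' 1 (n+1) (by omega) y1 - a' n ξ) = 0 := by
      rw [map_sub, hjcompat, hy1, sub_self]
    have h1 := hK k' (n+1) _ h0
    rw [map_sub, sub_eq_zero] at h1
    have h2 := congrArg (b' (n+2)) h1
    have e2 : j2 k' (n+1) (n+2) (by omega) (j2 k' 1 (n+1) (by omega) y1)
        = j2 k' 1 (n+2) (by omega) y1 := hGcomp k' 1 (n+1) (n+2) (by omega) (by omega) y1
    rw [e2, iterB k' b' (n+5) hb' 1 (n+2) (by omega) (by omega) y1,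
      hb' (n+1) (by omega), hb'a' n (by omega), hFcomp] at h2
    have h3 := congrArg (i (n+3)) h2
    rw [hicompat, hicompat] at h3
    exact h3
  refine ⟨parta, ⟨fun n => AddMonoidHom.mk'
      (fun ξ => j k 3 (a 2 (hsurj2 n ξ).choose)) ?_, ?_, ?_⟩⟩
  · intro ξ₁ ξ₂
    have h1 := (hsurj2 n ξ₁).choose_spec
    have h2 := (hsurj2 n ξ₂).choose_spec
    have h3 := (hsurj2 n (ξ₁ + ξ₂)).choose_spec
    have h4 : i 2 ((hsurj2 n (ξ₁ + ξ₂)).choose)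
        = i 2 ((hsurj2 n ξ₁).choose + (hsurj2 n ξ₂).choose) := by
      rw [h3]
      rw [map_add, map_add, h1, h2]
    show j k 3 (a 2 (hsurj2 n (ξ₁ + ξ₂)).choose)
        = j k 3 (a 2 (hsurj2 n ξ₁).choose) + j k 3 (a 2 (hsurj2 n ξ₂).choose)
    rw [parta _ _ h4, map_add, map_add]
  · intro n ξ η hη
    exact parta _ _ (by rw [(hsurj2 n ξ).choose_spec, hη])
  · intro n m h ξ
    exact parta _ _ (by
      rw [(hsurj2 m (i2 n m h ξ)).choose_spec, (hsurj2 n ξ).choose_spec, hicompat])
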